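/- Let p be an odd prime, and let r, t be non-negative integers with r ≥ t and r - t even such that t_0 ≠ p - 1, r_0 ≡ t_0 (mod 2), and r_0 ≥ t_0 (where n_i denotes the i-th base-p digit of n). If (N, σ, δ, I) is an admissible quadruple for the pair (r, t) with N ≥ 1, then 0 ∉ I, σ_0 = t_0 + 1, and δ_0 = (r_0 - t_0)/2. -/
import Mathlib


/-- The `i`-th digit of the base-`p` expansion of `n`. -/
def digit (p n i : ℕ) : ℕ := n / p ^ i % p

/-- `σ_I = ∑_{i ∈ I} p^i σ_i`. -/
def digitSum (p σ : ℕ) (I : Finset ℕ) : ℕ := ∑ i ∈ I, p ^ i * digit p σ i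

/-- An admissible triple `(N, σ, δ)`. -/
def AdmissibleTriple (p N σ δ : ℕ) : Prop :=
  σ < p ^ (N + 1) - p ^ N ∧ δ < p ^ (N + 1) - p ^ N ∧
  (∀ i < N, digit p σ i + digit p δ i ≤ p - 1) ∧
  digit p σ N + digit p δ N < p - 1

/-- An admissible quadruple `(N, σ, δ, I)`. -/
def AdmissibleQuadruple (p N σ δ : ℕ) (I : Finset ℕ) : Prop :=
  AdmissibleTriple p N σ δ ∧ ∀ i ∈ I, digit p σ i ≠ 0 ∧ i ≠ N

/-- An admissible quadruple for the pair `(r, t)`. -/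
def AdmissibleQuadrupleFor (p r t N σ δ : ℕ) (I : Finset ℕ) : Prop :=
  AdmissibleQuadruple p N σ δ I ∧
  t + 2 * digitSum p σ I = p ^ N - 1 + σ ∧
  r ≡ p ^ N - 1 + σ + 2 * δ [MOD 2 * p ^ (N + 1)]

lemma aux_dvd_lt_two_mul {p x : ℕ} (hp : 0 < p) (h : p ∣ x) (h2 : x < 2 * p) :
    x = 0 ∨ x = p := by
  obtain ⟨k, rfl⟩ := h
  have hk : k < 2 := by
    by_contra h'
    push_neg at h'
    have : p * 2 ≤ p * k := Nat.mul_le_mul_left p h'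
    omega
  interval_cases k <;> omega

lemma aux_digitSum_modEq (p σ : ℕ) (I : Finset ℕ) :
    digitSum p σ I ≡ (if 0 ∈ I then digit p σ 0 else 0) [MOD p] := by
  unfold digitSum
  by_cases h0 : 0 ∈ I
  · rw [if_pos h0, ← Finset.add_sum_erase I _ h0]
    have hdvd : p ∣ ∑ i ∈ I.erase 0, p ^ i * digit p σ i :=
      Finset.dvd_sum fun i hi =>
        Dvd.dvd.mul_right (dvd_pow_self p (Finset.ne_of_mem_erase hi)) _
    have h1 : (∑ i ∈ I.erase 0, p ^ i * digit p σ i) ≡ 0 [MOD p] :=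
      (Nat.modEq_zero_iff_dvd).mpr hdvd
    have := (Nat.ModEq.refl (p ^ 0 * digit p σ 0)).add h1
    simpa using this
  · rw [if_neg h0]
    have hdvd : p ∣ ∑ i ∈ I, p ^ i * digit p σ i :=
      Finset.dvd_sum fun i hi =>
        Dvd.dvd.mul_right (dvd_pow_self p (fun hi0 => h0 (hi0 ▸ hi))) _
    exact (Nat.modEq_zero_iff_dvd).mpr hdvd

theorem stmt_13 (p : ℕ) (hp : p.Prime) (hodd : Odd p) (r t : ℕ) (hrt : t ≤ r)
    (hev : Even (r - t)) (ht0 : digit p t 0 ≠ p - 1)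
    (hpar : digit p r 0 % 2 = digit p t 0 % 2) (hge : digit p t 0 ≤ digit p r 0)
    (N σ δ : ℕ) (I : Finset ℕ)
    (h : AdmissibleQuadrupleFor p r t N σ δ I) (hN : 1 ≤ N) :
    0 ∉ I ∧ digit p σ 0 = digit p t 0 + 1 ∧
      2 * digit p δ 0 + digit p t 0 = digit p r 0 := by
  obtain ⟨⟨⟨hσlt, hδlt, hsum, hNlast⟩, hI⟩, heq, hmod⟩ := h
  have hp1 : 1 < p := hp.one_lt
  have hp0 : 0 < p := by omega
  have hpodd : p % 2 = 1 := Nat.odd_iff.mp hodd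
  have hd : ∀ n : ℕ, digit p n 0 = n % p := fun n => by simp [digit]
  -- digit bounds
  have ht0lt : t % p < p := Nat.mod_lt _ hp0
  have hr0lt : r % p < p := Nat.mod_lt _ hp0
  have hs0lt : σ % p < p := Nat.mod_lt _ hp0
  have hd0lt : δ % p < p := Nat.mod_lt _ hp0
  simp only [hd] at ht0 hpar hge ⊢
  have hsd : σ % p + δ % p ≤ p - 1 := by
    have := hsum 0 hN
    simpa only [hd] using this
  have ht0le : t % p ≤ p - 2 := by omega
  -- p^N - 1 ≡ p - 1 [MOD p]
  have hpow : (p ^ N - 1) ≡ p - 1 [MOD p] := by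
    obtain ⟨M, rfl⟩ : ∃ M, N = M + 1 := ⟨N - 1, by omega⟩
    have h1 : 0 < p ^ M := pow_pos hp0 M
    obtain ⟨q, hq⟩ : ∃ q, p ^ M = q + 1 := ⟨p ^ M - 1, by omega⟩
    show (p ^ (M + 1) - 1) % p = (p - 1) % p
    rw [pow_succ, hq, add_mul, one_mul]
    have e : q * p + p - 1 = p * q + (p - 1) := by
      have : q * p = p * q := mul_comm q p
      omega
    rw [e, Nat.mul_add_mod]
  -- first congruence reduced mod p
  have hSc : digitSum p σ I ≡ (if 0 ∈ I then σ % p else 0) [MOD p] := by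
    have := aux_digitSum_modEq p σ I
    rwa [hd] at this
  have hA : t + 2 * digitSum p σ I ≡ (p - 1) + σ [MOD p] := by
    rw [heq]; exact hpow.add_right σ
  have hA' : t % p + 2 * (if 0 ∈ I then σ % p else 0) ≡ (p - 1) + σ % p [MOD p] :=
    ((Nat.mod_modEq t p).add (hSc.symm.mul_left 2)).trans
      (hA.trans ((Nat.mod_modEq σ p).symm.add_left (p - 1)))
  -- second congruence reduced mod p
  have hdvdmod : p ∣ 2 * p ^ (N + 1) :=
    dvd_mul_of_dvd_right (dvd_pow_self p (by omega)) 2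
  have hB0 : r ≡ p ^ N - 1 + σ + 2 * δ [MOD p] := hmod.of_dvd hdvdmod
  have hB : r % p ≡ (p - 1) + σ % p + 2 * (δ % p) [MOD p] :=
    (Nat.mod_modEq r p).trans (hB0.trans
      ((hpow.add (Nat.mod_modEq σ p).symm).add ((Nat.mod_modEq δ p).symm.mul_left 2)))
  by_cases h0 : 0 ∈ I
  · -- contradiction case
    exfalso
    rw [if_pos h0] at hA'
    have h1 : (t % p + σ % p + 1) + σ % p ≡ p + σ % p [MOD p] := by
      have h' := hA'.add_right 1
      have e1 : t % p + σ % p + 1 + σ % p = t % p + 2 * (σ % p) + 1 := by ring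
      have e2 : p + σ % p = p - 1 + σ % p + 1 := by omega
      rw [e1, e2]; exact h'
    have h2 : t % p + σ % p + 1 ≡ p [MOD p] := h1.add_right_cancel' (σ % p)
    have h3 : p ∣ t % p + σ % p + 1 :=
      (Nat.modEq_zero_iff_dvd).mp (h2.trans ((Nat.modEq_zero_iff_dvd).mpr dvd_rfl))
    have hps : t % p + σ % p + 1 = p := by
      rcases aux_dvd_lt_two_mul hp0 h3 (by omega) with h4 | h4 <;> omega
    -- now use hB
    have h4 : r % p + t % p + 2 ≡ 2 * (δ % p) + 2 * p [MOD p] := by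
      have h' := hB.add_right (t % p + 2)
      have e1 : r % p + (t % p + 2) = r % p + t % p + 2 := by ring
      have e2 : p - 1 + σ % p + 2 * (δ % p) + (t % p + 2) = 2 * (δ % p) + 2 * p := by
        omega
      rw [e1, e2] at h'
      exact h'
    have hz : 2 * (δ % p) + 2 * p ≡ 2 * (δ % p) [MOD p] := by
      have : (2 * p) ≡ 0 [MOD p] := (Nat.modEq_zero_iff_dvd).mpr ⟨2, mul_comm 2 p⟩
      have h'' := (Nat.ModEq.refl (2 * (δ % p))).add this
      rwa [add_zero] at h''
    have h5 : r % p + t % p + 2 ≡ 2 * (δ % p) [MOD p] := h4.trans hz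
    have hd0t : δ % p ≤ t % p := by omega
    have hle : 2 * (δ % p) ≤ r % p + t % p + 2 := by omega
    have h6 : p ∣ r % p + t % p + 2 - 2 * (δ % p) := (Nat.modEq_iff_dvd' hle).mp h5.symm
    rcases aux_dvd_lt_two_mul hp0 h6 (by omega) with h7 | h7 <;> omega
  · rw [if_neg h0] at hA'
    have h1 : t % p + 1 ≡ σ % p + p [MOD p] := by
      have h' := hA'.add_right 1
      have e1 : t % p + 2 * 0 + 1 = t % p + 1 := by ring
      have e2 : p - 1 + σ % p + 1 = σ % p + p := by omega
      rw [e1, e2] at h'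
      exact h'
    have hz : σ % p + p ≡ σ % p [MOD p] := by
      have : (p : ℕ) ≡ 0 [MOD p] := (Nat.modEq_zero_iff_dvd).mpr dvd_rfl
      have h'' := (Nat.ModEq.refl (σ % p)).add this
      rwa [add_zero] at h''
    have h2 : t % p + 1 ≡ σ % p [MOD p] := h1.trans hz
    have hs : σ % p = t % p + 1 := by
      have h' : (t % p + 1) % p = (σ % p) % p := h2
      rw [Nat.mod_eq_of_lt (show t % p + 1 < p by omega),
        Nat.mod_eq_of_lt hs0lt] at h'
      omega
    -- second congruence
    have h3 : r % p ≡ t % p + 2 * (δ % p) [MOD p] := by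
      refine hB.trans ?_
      have e : p - 1 + σ % p + 2 * (δ % p) = t % p + 2 * (δ % p) + p := by omega
      rw [e]
      have : (p : ℕ) ≡ 0 [MOD p] := (Nat.modEq_zero_iff_dvd).mpr dvd_rfl
      have h'' := (Nat.ModEq.refl (t % p + 2 * (δ % p))).add this
      rwa [add_zero] at h''
    have hub : t % p + 2 * (δ % p) < 2 * p := by omega
    rcases le_or_gt (r % p) (t % p + 2 * (δ % p)) with hle | hlt
    · have h4 : p ∣ t % p + 2 * (δ % p) - r % p := (Nat.modEq_iff_dvd' hle).mp h3
      rcases aux_dvd_lt_two_mul hp0 h4 (by omega) with h5 | h5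
      · exact ⟨h0, hs, by omega⟩
      · exfalso; omega
    · exfalso
      have h' : (r % p) % p = (t % p + 2 * (δ % p)) % p := h3
      rw [Nat.mod_eq_of_lt hr0lt,
        Nat.mod_eq_of_lt (show t % p + 2 * (δ % p) < p by omega)] at h'
      omega
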